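/- arXiv:2109.11516 — 5 statements merged into one kernel-verified Lean document; each statement's English description precedes it below -/
import Mathlib

section
/- For closed bounded intervals A and B and any λ ∈ [0,1], ((1−λ) ⊙ A ⊕ λ ⊙ B) ⊖_gH A = λ ⊙ (B ⊖_gH A). -/
/-- ((1−λ) ⊙ A ⊕ λ ⊙ B) ⊖_gH A = λ ⊙ (B ⊖_gH A) for λ ∈ [0,1]. -/
theorem convexComb_gH_sub (a₁ a₂ b₁ b₂ l : ℝ) (ha : a₁ ≤ a₂) (hb : b₁ ≤ b₂)
    (hl0 : 0 ≤ l) (hl1 : l ≤ 1) :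
    min (((1 - l) * a₁ + l * b₁) - a₁) (((1 - l) * a₂ + l * b₂) - a₂)
        = l * min (b₁ - a₁) (b₂ - a₂) ∧
      max (((1 - l) * a₁ + l * b₁) - a₁) (((1 - l) * a₂ + l * b₂) - a₂)
        = l * max (b₁ - a₁) (b₂ - a₂) := by
  have h1 : ((1 - l) * a₁ + l * b₁) - a₁ = l * (b₁ - a₁) := by ring
  have h2 : ((1 - l) * a₂ + l * b₂) - a₂ = l * (b₂ - a₂) := by ring
  rw [h1, h2, mul_min_of_nonneg _ _ hl0, mul_max_of_nonneg _ _ hl0]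
  exact ⟨rfl, rfl⟩
end

section
/- Let S be a nonempty subset of I(ℝ)ⁿ. The support function ψ*_S(x) = sup_{Â∈S} xᵀ ⊙ Â is finite for every x ∈ ℝⁿ if and only if S is bounded, i.e., there exists M > 0 with ‖Â‖_{I(ℝ)ⁿ} ≤ M for all Â ∈ S. -/
lemma aux_bound_of_ne_top {α : Type*} {S : Set α} (f : α → ℝ)
    (h : sSup ((fun a => ((f a : ℝ) : EReal)) '' S) ≠ ⊤) :
    ∃ B : ℝ, ∀ a ∈ S, f a ≤ B := by
  rcases S.eq_empty_or_nonempty with rfl | ⟨a0, ha0⟩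
  · exact ⟨0, by simp⟩
  set T := sSup ((fun a => ((f a : ℝ) : EReal)) '' S) with hT
  have hle : (f a0 : EReal) ≤ T := le_sSup ⟨a0, ha0, rfl⟩
  have hbot : T ≠ ⊥ := by
    intro hb
    rw [hb, le_bot_iff] at hle
    exact (EReal.coe_ne_bot _) hle
  refine ⟨T.toReal, fun a ha => ?_⟩
  have h2 : (f a : EReal) ≤ T := le_sSup ⟨a, ha, rfl⟩
  rwa [← EReal.coe_toReal h hbot, EReal.coe_le_coe_iff] at h2

lemma aux_ne_top {α : Type*} {S : Set α} (f : α → ℝ) (B : ℝ)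
    (hb : ∀ a ∈ S, f a ≤ B) :
    sSup ((fun a => ((f a : ℝ) : EReal)) '' S) ≠ ⊤ := by
  have : sSup ((fun a => ((f a : ℝ) : EReal)) '' S) ≤ (B : EReal) := by
    apply sSup_le
    rintro y ⟨a, ha, rfl⟩
    exact EReal.coe_le_coe_iff.mpr (hb a ha)
  exact ne_top_of_le_ne_top (EReal.coe_ne_top B) this

lemma aux_ne_bot {α : Type*} {S : Set α} (hS : S.Nonempty) (f : α → ℝ) :
    sSup ((fun a => ((f a : ℝ) : EReal)) '' S) ≠ ⊥ := by
  obtain ⟨a0, ha0⟩ := hS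
  have hle : (f a0 : EReal) ≤ sSup ((fun a => ((f a : ℝ) : EReal)) '' S) :=
    le_sSup ⟨a0, ha0, rfl⟩
  intro hb
  rw [hb, le_bot_iff] at hle
  exact (EReal.coe_ne_bot _) hle

/-- The support function of a nonempty set of interval vectors is finite everywhere
iff the set is bounded in the interval-vector norm. -/
theorem support_function_finite_iff_bounded {n : ℕ}
    (S : Set ((Fin n → ℝ) × (Fin n → ℝ))) (hS : S.Nonempty)
    (hval : ∀ A ∈ S, ∀ i, A.1 i ≤ A.2 i) :
    (∀ x : Fin n → ℝ,
        sSup ((fun A : (Fin n → ℝ) × (Fin n → ℝ) =>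
          ((min (∑ i, x i * A.1 i) (∑ i, x i * A.2 i) : ℝ) : EReal)) '' S) ≠ ⊤ ∧
        sSup ((fun A : (Fin n → ℝ) × (Fin n → ℝ) =>
          ((min (∑ i, x i * A.1 i) (∑ i, x i * A.2 i) : ℝ) : EReal)) '' S) ≠ ⊥ ∧
        sSup ((fun A : (Fin n → ℝ) × (Fin n → ℝ) =>
          ((max (∑ i, x i * A.1 i) (∑ i, x i * A.2 i) : ℝ) : EReal)) '' S) ≠ ⊤ ∧
        sSup ((fun A : (Fin n → ℝ) × (Fin n → ℝ) =>
          ((max (∑ i, x i * A.1 i) (∑ i, x i * A.2 i) : ℝ) : EReal)) '' S) ≠ ⊥) ↔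
      ∃ M > (0 : ℝ), ∀ A ∈ S, (∑ i, max |A.1 i| |A.2 i|) ≤ M := by
  constructor
  · intro h
    -- bounds from coordinate directions
    have key : ∀ x : Fin n → ℝ, ∃ B : ℝ, ∀ A ∈ S,
        max (∑ i, x i * A.1 i) (∑ i, x i * A.2 i) ≤ B := by
      intro x
      exact aux_bound_of_ne_top _ ((h x).2.2.1)
    have hp := fun i : Fin n => key (fun j => if j = i then 1 else 0)
    have hm := fun i : Fin n => key (fun j => if j = i then -1 else 0)
    choose Bp hBp using hp
    choose Bm hBm using hm
    -- simplify sums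
    have hb' : ∀ i : Fin n, ∀ A ∈ S, A.2 i ≤ Bp i := by
      intro i A hA
      have := hBp i A hA
      simp only [ite_mul, one_mul, zero_mul, Finset.sum_ite_eq', Finset.mem_univ,
        if_true] at this
      exact le_trans (le_max_right _ _) this
    have ha' : ∀ i : Fin n, ∀ A ∈ S, -A.1 i ≤ Bm i := by
      intro i A hA
      have := hBm i A hA
      simp only [ite_mul, neg_one_mul, zero_mul, Finset.sum_ite_eq', Finset.mem_univ,
        if_true] at this
      have hmax : max (-A.1 i) (-A.2 i) = -A.1 i :=
        max_eq_left (neg_le_neg (hval A hA i))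
      rw [hmax] at this
      exact this
    set C : Fin n → ℝ := fun i => max (Bp i) (Bm i) with hC
    have hCi : ∀ i : Fin n, ∀ A ∈ S, max |A.1 i| |A.2 i| ≤ C i := by
      intro i A hA
      have h1 : |A.1 i| ≤ C i := by
        rw [abs_le]
        constructor
        · linarith [ha' i A hA, le_max_right (Bp i) (Bm i)]
        · exact le_trans (le_trans (hval A hA i) (hb' i A hA)) (le_max_left _ _)
      have h2 : |A.2 i| ≤ C i := by
        rw [abs_le]
        constructor
        · linarith [ha' i A hA, hval A hA i, le_max_right (Bp i) (Bm i)]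
        · exact le_trans (hb' i A hA) (le_max_left _ _)
      exact max_le h1 h2
    refine ⟨(∑ i, C i) + 1, ?_, ?_⟩
    · obtain ⟨A0, hA0⟩ := hS
      have : (0:ℝ) ≤ ∑ i, C i := by
        apply Finset.sum_nonneg
        intro i _
        exact le_trans (le_trans (abs_nonneg _) (le_max_left _ _)) (hCi i A0 hA0)
      linarith
    · intro A hA
      have : (∑ i, max |A.1 i| |A.2 i|) ≤ ∑ i, C i :=
        Finset.sum_le_sum (fun i _ => hCi i A hA)
      linarith
  · rintro ⟨M, hM, hbd⟩ x
    set X : ℝ := ∑ i, |x i| with hX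
    have habs : ∀ A ∈ S, |∑ i, x i * A.1 i| ≤ X * M ∧ |∑ i, x i * A.2 i| ≤ X * M := by
      intro A hA
      have hm : ∀ i : Fin n, max |A.1 i| |A.2 i| ≤ M := by
        intro i
        refine le_trans ?_ (hbd A hA)
        apply Finset.single_le_sum (f := fun i => max |A.1 i| |A.2 i|)
          (fun j _ => le_trans (abs_nonneg _) (le_max_left _ _)) (Finset.mem_univ i)
      constructor
      · calc |∑ i, x i * A.1 i| ≤ ∑ i, |x i * A.1 i| := Finset.abs_sum_le_sum_abs _ _
          _ ≤ ∑ i, |x i| * M := by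
              apply Finset.sum_le_sum
              intro i _
              rw [abs_mul]
              exact mul_le_mul_of_nonneg_left
                (le_trans (le_trans (le_max_left _ _) (hm i)) le_rfl) (abs_nonneg _)
          _ = X * M := by rw [hX, Finset.sum_mul]
      · calc |∑ i, x i * A.2 i| ≤ ∑ i, |x i * A.2 i| := Finset.abs_sum_le_sum_abs _ _
          _ ≤ ∑ i, |x i| * M := by
              apply Finset.sum_le_sum
              intro i _
              rw [abs_mul]
              exact mul_le_mul_of_nonneg_left
                (le_trans (le_max_right _ _) (hm i)) (abs_nonneg _)
          _ = X * M := by rw [hX, Finset.sum_mul]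
    refine ⟨?_, ?_, ?_, ?_⟩
    · apply aux_ne_top _ (X * M)
      intro A hA
      exact le_trans (min_le_left _ _) (le_trans (le_abs_self _) (habs A hA).1)
    · exact aux_ne_bot hS _
    · apply aux_ne_top _ (X * M)
      intro A hA
      exact max_le (le_trans (le_abs_self _) (habs A hA).1)
        (le_trans (le_abs_self _) (habs A hA).2)
    · exact aux_ne_bot hS _
end

section
/- Let F = [F₁,F₂] be a proper convex interval-valued function on ℝⁿ and x̄ an interior point of dom(F). Then for every direction h, the gH-directional derivative equals the support function of the gH-subdifferential set: F_D(x̄)(h) = ψ*_{∂F(x̄)}(h). -/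
open Filter Set

lemma slope_aux {E : Type*} [NormedAddCommGroup E] [NormedSpace ℝ E]
    {X : Set E} {f : E → ℝ} (hf : ConvexOn ℝ X f) {x₀ : E} (hx₀ : x₀ ∈ X)
    (v : E) {s t : ℝ} (hs : s ≠ 0) (ht : t ≠ 0) (hst : s ≤ t)
    (hsX : x₀ + s • v ∈ X) (htX : x₀ + t • v ∈ X) :
    (f (x₀ + s • v) - f x₀) / s ≤ (f (x₀ + t • v) - f x₀) / t := by
  have hφ : ConvexOn ℝ ((AffineMap.lineMap x₀ (x₀ + v) : ℝ →ᵃ[ℝ] E) ⁻¹' X)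
      (f ∘ (AffineMap.lineMap x₀ (x₀ + v) : ℝ →ᵃ[ℝ] E)) :=
    hf.comp_affineMap _
  have hline : ∀ c : ℝ, (AffineMap.lineMap x₀ (x₀ + v) : ℝ →ᵃ[ℝ] E) c = x₀ + c • v := by
    intro c
    simp [AffineMap.lineMap_apply, add_comm]
  have h0 : (0 : ℝ) ∈ (AffineMap.lineMap x₀ (x₀ + v) : ℝ →ᵃ[ℝ] E) ⁻¹' X := by
    simp only [Set.mem_preimage, hline, zero_smul, add_zero]; exact hx₀
  have hsm : s ∈ (AffineMap.lineMap x₀ (x₀ + v) : ℝ →ᵃ[ℝ] E) ⁻¹' X := by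
    simp only [Set.mem_preimage, hline]; exact hsX
  have htm : t ∈ (AffineMap.lineMap x₀ (x₀ + v) : ℝ →ᵃ[ℝ] E) ⁻¹' X := by
    simp only [Set.mem_preimage, hline]; exact htX
  have := hφ.secant_mono h0 hsm htm hs ht hst
  simpa [Function.comp, hline, zero_smul, add_zero, sub_zero] using this

lemma exists_subgradient {E : Type*} [NormedAddCommGroup E] [NormedSpace ℝ E]
    {X : Set E} {f : E → ℝ} (hf : ConvexOn ℝ X f)
    {x₀ : E} (hx₀ : x₀ ∈ interior X) {h : E} {D : ℝ}
    (hD : Tendsto (fun t : ℝ => (f (x₀ + t • h) - f x₀) / t)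
      (nhdsWithin 0 (Set.Ioi 0)) (nhds D)) :
    ∃ g : E →ₗ[ℝ] ℝ, g h = D ∧ ∀ x ∈ X, g (x - x₀) ≤ f x - f x₀ := by
  obtain ⟨ε, hε, hball⟩ : ∃ ε > 0, Metric.ball x₀ ε ⊆ X :=
    Metric.mem_nhds_iff.mp (mem_interior_iff_mem_nhds.mp hx₀)
  have hx₀X : x₀ ∈ X := interior_subset hx₀
  set q : E → ℝ → ℝ := fun v t => (f (x₀ + t • v) - f x₀) / t with hq
  set T : E → ℝ := fun v => min (ε / (‖v‖ + 1)) 1 with hTdef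
  have hT : ∀ v, 0 < T v := by
    intro v
    exact lt_min (div_pos hε (by positivity)) one_pos
  have hdom : ∀ v : E, ∀ t : ℝ, 0 < |t| → |t| ≤ T v → x₀ + t • v ∈ X := by
    intro v t ht0 htT
    apply hball
    rw [Metric.mem_ball, dist_eq_norm, add_sub_cancel_left, norm_smul, Real.norm_eq_abs]
    calc |t| * ‖v‖ ≤ (ε / (‖v‖ + 1)) * ‖v‖ := by
          apply mul_le_mul_of_nonneg_right (htT.trans (min_le_left _ _)) (norm_nonneg v)
      _ < ε := by
          rw [div_mul_eq_mul_div, div_lt_iff₀ (by positivity)]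
          nlinarith [norm_nonneg v]
  -- key slope monotonicity
  have key : ∀ v : E, ∀ s t : ℝ, s ≠ 0 → t ≠ 0 → s ≤ t →
      x₀ + s • v ∈ X → x₀ + t • v ∈ X → q v s ≤ q v t := by
    intro v s t hs ht hst hsX htX
    exact slope_aux hf hx₀X v hs ht hst hsX htX
  set p : E → ℝ := fun v => sInf (q v '' Set.Ioc 0 (T v)) with hpdef
  have hmem : ∀ v : E, ∀ t ∈ Set.Ioc 0 (T v), x₀ + t • v ∈ X := by
    intro v t ht
    exact hdom v t (by rw [abs_of_pos ht.1]; exact ht.1) (by rw [abs_of_pos ht.1]; exact ht.2)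
  have hne : ∀ v : E, (q v '' Set.Ioc 0 (T v)).Nonempty := by
    intro v
    exact ⟨q v (T v), ⟨T v, ⟨hT v, le_refl _⟩, rfl⟩⟩
  have hbdd : ∀ v : E, BddBelow (q v '' Set.Ioc 0 (T v)) := by
    intro v
    refine ⟨q v (-(T v)), ?_⟩
    rintro y ⟨t, ht, rfl⟩
    have hneg : x₀ + (-(T v)) • v ∈ X := by
      apply hdom v _ _ _
      · rw [abs_neg, abs_of_pos (hT v)]; exact hT v
      · rw [abs_neg, abs_of_pos (hT v)]
    exact key v (-(T v)) t (by linarith [hT v]) (ne_of_gt ht.1)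
      (by linarith [hT v, ht.1]) hneg (hmem v t ht)
  -- p v ≤ q v t for any valid positive t
  have pi : ∀ v : E, ∀ t : ℝ, 0 < t → x₀ + t • v ∈ X → p v ≤ q v t := by
    intro v t ht htX
    have ht' : min t (T v) ∈ Set.Ioc 0 (T v) := ⟨lt_min ht (hT v), min_le_right _ _⟩
    have h1 : p v ≤ q v (min t (T v)) := csInf_le (hbdd v) ⟨_, ht', rfl⟩
    refine h1.trans (key v _ t (ne_of_gt ht'.1) (ne_of_gt ht) (min_le_left _ _)
      (hmem v _ ht') htX)
  have ple : ∀ v : E, ∀ c : ℝ, (∀ t ∈ Set.Ioc 0 (T v), c ≤ q v t) → c ≤ p v := by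
    intro v c H
    refine le_csInf (hne v) ?_
    rintro y ⟨t, ht, rfl⟩
    exact H t ht
  have p0 : p 0 = 0 := by
    have h1 : p 0 ≤ q 0 (T 0) := pi 0 (T 0) (hT 0) (by simpa using hx₀X)
    have h2 : (0:ℝ) ≤ p 0 := ple 0 0 (by intro t ht; simp [hq])
    have : q 0 (T 0) = 0 := by simp [hq]
    linarith [h1, h2, this.symm ▸ h1]
  -- positive homogeneity
  have phom : ∀ c : ℝ, 0 < c → ∀ v : E, p (c • v) = c * p v := by
    intro c hc v
    have le₁ : p (c • v) ≤ c * p v := by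
      rw [← div_le_iff₀' hc] at *
      refine ple v _ ?_
      intro t ht
      rw [div_le_iff₀' hc]
      have h1 : p (c • v) ≤ q (c • v) (t / c) := by
        apply pi _ _ (div_pos ht.1 hc)
        rw [smul_smul, div_mul_cancel₀ _ (ne_of_gt hc)]
        exact hmem v t ht
      have h2 : q (c • v) (t / c) = c * q v t := by
        rw [hq]
        simp only [smul_smul, div_mul_cancel₀ _ (ne_of_gt hc)]
        rw [div_div_eq_mul_div, mul_comm, mul_div_assoc]
      linarith [h1, h2.symm ▸ h1]
    have le₂ : c * p v ≤ p (c • v) := by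
      refine ple (c • v) _ ?_
      intro t ht
      have h2 : q (c • v) t = c * q v (t * c) := by
        rw [hq]
        simp only [smul_smul]
        rw [mul_comm t c]
        have hc0 : c ≠ 0 := ne_of_gt hc
        have ht0 : t ≠ 0 := ne_of_gt ht.1
        field_simp
      have h1 : p v ≤ q v (t * c) := by
        apply pi _ _ (mul_pos ht.1 hc)
        have : (t * c) • v = t • (c • v) := by rw [smul_smul, mul_comm]
        rw [this]
        exact hmem (c • v) t ht
      rw [h2]
      exact mul_le_mul_of_nonneg_left h1 hc.le
    linarith
  -- subadditivity
  have padd : ∀ u v : E, p (u + v) ≤ p u + p v := by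
    intro u v
    have claim : ∀ s ∈ Set.Ioc 0 (T u), ∀ t ∈ Set.Ioc 0 (T v),
        p (u + v) ≤ q u s + q v t := by
      intro s hs t ht
      set r := min s t / 2 with hrdef
      have hr : 0 < r := by
        have := lt_min hs.1 ht.1
        rw [hrdef]; linarith
      have h2rs : 2 * r ≤ s := by
        rw [hrdef]; have := min_le_left s t; linarith
      have h2rt : 2 * r ≤ t := by
        rw [hrdef]; have := min_le_right s t; linarith
      have hu2 : x₀ + (2 * r) • u ∈ X :=
        hmem u (2 * r) ⟨by linarith, le_trans h2rs hs.2⟩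
      have hv2 : x₀ + (2 * r) • v ∈ X :=
        hmem v (2 * r) ⟨by linarith, le_trans h2rt ht.2⟩
      have hmid : x₀ + r • (u + v) ∈ X := by
        have := hf.1 hu2 hv2 (by norm_num : (0:ℝ) ≤ 1/2) (by norm_num : (0:ℝ) ≤ 1/2)
          (by norm_num)
        have heq : (1/2 : ℝ) • (x₀ + (2*r) • u) + (1/2 : ℝ) • (x₀ + (2*r) • v)
            = x₀ + r • (u + v) := by
          rw [smul_add, smul_add, smul_smul, smul_smul, smul_add]
          have : (1/2 : ℝ) * (2 * r) = r := by ring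
          rw [this]
          module
        rwa [heq] at this
      have h1 : p (u + v) ≤ q (u + v) r := pi _ r hr hmid
      have hfmid : f (x₀ + r • (u + v)) ≤
          (1/2) * f (x₀ + (2*r) • u) + (1/2) * f (x₀ + (2*r) • v) := by
        have := hf.2 hu2 hv2 (by norm_num : (0:ℝ) ≤ 1/2) (by norm_num : (0:ℝ) ≤ 1/2)
          (by norm_num)
        have heq : (1/2 : ℝ) • (x₀ + (2*r) • u) + (1/2 : ℝ) • (x₀ + (2*r) • v)
            = x₀ + r • (u + v) := by
          rw [smul_add, smul_add, smul_smul, smul_smul, smul_add]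
          have : (1/2 : ℝ) * (2 * r) = r := by ring
          rw [this]
          module
        rw [heq] at this
        simpa using this
      have h2 : q (u + v) r ≤ q u (2*r) + q v (2*r) := by
        rw [hq]
        simp only
        rw [← add_div, div_le_div_iff₀ hr (by linarith : (0:ℝ) < 2*r)]
        nlinarith [hfmid]
      have h3 : q u (2*r) ≤ q u s :=
        key u (2*r) s (by linarith) (ne_of_gt hs.1) h2rs hu2 (hmem u s hs)
      have h4 : q v (2*r) ≤ q v t :=
        key v (2*r) t (by linarith) (ne_of_gt ht.1) h2rt hv2 (hmem v t ht)
      linarith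
    have step1 : ∀ t ∈ Set.Ioc 0 (T v), p (u + v) - q v t ≤ p u := by
      intro t ht
      rw [sub_le_iff_le_add]
      have : ∀ s ∈ Set.Ioc 0 (T u), p (u + v) - q v t ≤ q u s := by
        intro s hs
        linarith [claim s hs t ht]
      have := ple u (p (u + v) - q v t) this
      linarith
    have : ∀ t ∈ Set.Ioc 0 (T v), p (u + v) - p u ≤ q v t := by
      intro t ht
      linarith [step1 t ht]
    have := ple v (p (u + v) - p u) this
    linarith
  -- p h = D
  have pD : p h = D := by
    have le₁ : p h ≤ D := by
      refine ge_of_tendsto hD ?_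
      filter_upwards [Ioc_mem_nhdsGT_of_mem (⟨le_refl (0:ℝ), hT h⟩ : (0:ℝ) ∈ Set.Ico 0 (T h))]
        with t ht
      exact pi h t ht.1 (hmem h t ht)
    have le₂ : D ≤ p h := by
      refine ple h D ?_
      intro t ht
      refine le_of_tendsto hD ?_
      filter_upwards [Ioc_mem_nhdsGT_of_mem (⟨le_refl (0:ℝ), ht.1⟩ : (0:ℝ) ∈ Set.Ico 0 t)]
        with s hs
      exact key h s t (ne_of_gt hs.1) (ne_of_gt ht.1) hs.2
        (hmem h s ⟨hs.1, hs.2.trans ht.2⟩) (hmem h t ht)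
    linarith
  -- conclusion via Hahn-Banach
  have final : ∀ g : E →ₗ[ℝ] ℝ, (∀ x, g x ≤ p x) → ∀ x ∈ X, g (x - x₀) ≤ f x - f x₀ := by
    intro g hg x hx
    refine (hg (x - x₀)).trans ?_
    have h1 : p (x - x₀) ≤ q (x - x₀) 1 := by
      apply pi _ 1 one_pos
      rw [one_smul, add_sub_cancel]
      exact hx
    have h2 : q (x - x₀) 1 = f x - f x₀ := by
      rw [hq]; simp
    linarith
  have pneg : -D ≤ p (-h) := by
    have := padd h (-h)
    rw [add_neg_cancel, p0, pD] at this
    linarith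
  by_cases hh : h = 0
  · -- D = 0
    have hD0 : D = 0 := by
      have : Tendsto (fun t : ℝ => (f (x₀ + t • h) - f x₀) / t)
          (nhdsWithin 0 (Set.Ioi 0)) (nhds 0) := by
        have : (fun t : ℝ => (f (x₀ + t • h) - f x₀) / t) = fun _ => 0 := by
          funext t; rw [hh]; simp
        rw [this]
        exact tendsto_const_nhds
      exact tendsto_nhds_unique hD this
    obtain ⟨g, hgext, hgle⟩ := exists_extension_of_le_sublinear
      ⟨(⊥ : Submodule ℝ E), 0⟩ p (fun c hc x => phom c hc x) padd
      (by
        rintro ⟨x, hx⟩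
        have : x = 0 := by simpa using hx
        subst this
        simp [p0])
    exact ⟨g, by rw [hh, map_zero, hD0], final g hgle⟩
  · set fpm : E →ₗ.[ℝ] ℝ := LinearPMap.mkSpanSingleton h D hh with hfpm
    obtain ⟨g, hgext, hgle⟩ := exists_extension_of_le_sublinear fpm p
      (fun c hc x => phom c hc x) padd
      (by
        rintro ⟨x, hx⟩
        obtain ⟨c, rfl⟩ := Submodule.mem_span_singleton.mp hx
        have happ : fpm ⟨c • h, hx⟩ = c • D := LinearPMap.mkSpanSingleton'_apply _ _ _ c hx
        rw [happ]
        rcases lt_trichotomy c 0 with hc | hc | hc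
        · have hch : c • h = (-c) • (-h) := by rw [neg_smul, smul_neg, neg_neg]
          have hpe : p (c • h) = (-c) * p (-h) :=
            (congrArg p hch).trans (phom (-c) (by linarith) (-h))
          rw [hpe]
          have : (-c) * (-D) ≤ (-c) * p (-h) :=
            mul_le_mul_of_nonneg_left pneg (by linarith)
          simp only [smul_eq_mul]
          nlinarith
        · subst hc
          simp [p0]
        · rw [phom c hc h, pD]
          simp [smul_eq_mul])
    refine ⟨g, ?_, final g hgle⟩
    have := hgext ⟨h, Submodule.mem_span_singleton_self h⟩
    rw [this]
    exact LinearPMap.mkSpanSingleton_apply ℝ ℝ hh D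

lemma sum_coord {n : ℕ} (g : EuclideanSpace ℝ (Fin n) →ₗ[ℝ] ℝ)
    (v : EuclideanSpace ℝ (Fin n)) :
    ∑ i, v i * g (EuclideanSpace.single i 1) = g v := by
  have hv : ∑ i, v i • (EuclideanSpace.single i 1 : EuclideanSpace ℝ (Fin n)) = v := by
    have := (EuclideanSpace.basisFun (Fin n) ℝ).sum_repr v
    simpa [EuclideanSpace.basisFun_apply, EuclideanSpace.basisFun_repr] using this
  conv_rhs => rw [← hv]
  rw [map_sum]
  simp [map_smul, smul_eq_mul]

/-- The gH-directional derivative of F at an interior point equals the support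
function of the gH-subdifferential set. -/
theorem gH_dirDeriv_eq_support_of_subdifferential {n : ℕ}
    (X : Set (EuclideanSpace ℝ (Fin n))) (hXc : Convex ℝ X)
    (F₁ F₂ : EuclideanSpace ℝ (Fin n) → ℝ)
    (h₁ : ConvexOn ℝ X F₁) (h₂ : ConvexOn ℝ X F₂) (hle : ∀ x ∈ X, F₁ x ≤ F₂ x)
    (x₀ : EuclideanSpace ℝ (Fin n)) (hx₀ : x₀ ∈ interior X)
    (h : EuclideanSpace ℝ (Fin n)) (D₁ D₂ : ℝ)
    (hD₁ : Tendsto (fun t : ℝ => (F₁ (x₀ + t • h) - F₁ x₀) / t)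
      (nhdsWithin 0 (Set.Ioi 0)) (nhds D₁))
    (hD₂ : Tendsto (fun t : ℝ => (F₂ (x₀ + t • h) - F₂ x₀) / t)
      (nhdsWithin 0 (Set.Ioi 0)) (nhds D₂)) :
    min D₁ D₂ = sSup {r : ℝ | ∃ G : (Fin n → ℝ) × (Fin n → ℝ),
        (∀ x ∈ X,
          min (∑ i, (x i - x₀ i) * G.1 i) (∑ i, (x i - x₀ i) * G.2 i) ≤
              min (F₁ x - F₁ x₀) (F₂ x - F₂ x₀) ∧
            max (∑ i, (x i - x₀ i) * G.1 i) (∑ i, (x i - x₀ i) * G.2 i) ≤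
              max (F₁ x - F₁ x₀) (F₂ x - F₂ x₀)) ∧
        r = min (∑ i, h i * G.1 i) (∑ i, h i * G.2 i)} ∧
      max D₁ D₂ = sSup {r : ℝ | ∃ G : (Fin n → ℝ) × (Fin n → ℝ),
        (∀ x ∈ X,
          min (∑ i, (x i - x₀ i) * G.1 i) (∑ i, (x i - x₀ i) * G.2 i) ≤
              min (F₁ x - F₁ x₀) (F₂ x - F₂ x₀) ∧
            max (∑ i, (x i - x₀ i) * G.1 i) (∑ i, (x i - x₀ i) * G.2 i) ≤
              max (F₁ x - F₁ x₀) (F₂ x - F₂ x₀)) ∧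
        r = max (∑ i, h i * G.1 i) (∑ i, h i * G.2 i)} := by
  obtain ⟨g₁, hg₁h, hg₁sub⟩ := exists_subgradient h₁ hx₀ hD₁
  obtain ⟨g₂, hg₂h, hg₂sub⟩ := exists_subgradient h₂ hx₀ hD₂
  set G : (Fin n → ℝ) × (Fin n → ℝ) :=
    (fun i => g₁ (EuclideanSpace.single i 1), fun i => g₂ (EuclideanSpace.single i 1)) with hG
  have hco : ∀ x : EuclideanSpace ℝ (Fin n), ∀ i, (x - x₀) i = x i - x₀ i :=
    fun x i => rfl
  have hs1 : ∀ x : EuclideanSpace ℝ (Fin n),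
      ∑ i, (x i - x₀ i) * G.1 i = g₁ (x - x₀) := by
    intro x
    rw [← sum_coord g₁ (x - x₀)]
    exact Finset.sum_congr rfl fun i _ => by rw [hco]
  have hs2 : ∀ x : EuclideanSpace ℝ (Fin n),
      ∑ i, (x i - x₀ i) * G.2 i = g₂ (x - x₀) := by
    intro x
    rw [← sum_coord g₂ (x - x₀)]
    exact Finset.sum_congr rfl fun i _ => by rw [hco]
  have hh1 : ∑ i, h i * G.1 i = D₁ := by rw [← hg₁h, ← sum_coord g₁ h]
  have hh2 : ∑ i, h i * G.2 i = D₂ := by rw [← hg₂h, ← sum_coord g₂ h]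
  have hfeas : ∀ x ∈ X,
      min (∑ i, (x i - x₀ i) * G.1 i) (∑ i, (x i - x₀ i) * G.2 i) ≤
          min (F₁ x - F₁ x₀) (F₂ x - F₂ x₀) ∧
        max (∑ i, (x i - x₀ i) * G.1 i) (∑ i, (x i - x₀ i) * G.2 i) ≤
          max (F₁ x - F₁ x₀) (F₂ x - F₂ x₀) := by
    intro x hx
    rw [hs1, hs2]
    have a₁ := hg₁sub x hx
    have a₂ := hg₂sub x hx
    constructor
    · exact le_min ((min_le_left _ _).trans a₁) ((min_le_right _ _).trans a₂)
    · exact max_le (a₁.trans (le_max_left _ _)) (a₂.trans (le_max_right _ _))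
  -- eventual membership of the ray in X
  obtain ⟨ε, hε, hball⟩ : ∃ ε > 0, Metric.ball x₀ ε ⊆ X :=
    Metric.mem_nhds_iff.mp (mem_interior_iff_mem_nhds.mp hx₀)
  have hev : ∀ᶠ t in nhdsWithin (0:ℝ) (Set.Ioi 0), 0 < t ∧ x₀ + t • h ∈ X := by
    have hpos : (0:ℝ) < ε / (‖h‖ + 1) := div_pos hε (by positivity)
    filter_upwards [Ioc_mem_nhdsGT_of_mem
      (⟨le_refl (0:ℝ), hpos⟩ : (0:ℝ) ∈ Set.Ico 0 (ε / (‖h‖ + 1)))] with t ht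
    refine ⟨ht.1, hball ?_⟩
    rw [Metric.mem_ball, dist_eq_norm, add_sub_cancel_left, norm_smul, Real.norm_eq_abs,
      abs_of_pos ht.1]
    calc t * ‖h‖ ≤ (ε / (‖h‖ + 1)) * ‖h‖ :=
          mul_le_mul_of_nonneg_right ht.2 (norm_nonneg h)
      _ < ε := by
          rw [div_mul_eq_mul_div, div_lt_iff₀ (by positivity)]
          nlinarith [norm_nonneg h]
  have hray : ∀ t : ℝ, ∀ Gp : (Fin n → ℝ) × (Fin n → ℝ),
      (∑ i, ((x₀ + t • h) i - x₀ i) * Gp.1 i = t * ∑ i, h i * Gp.1 i) ∧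
      (∑ i, ((x₀ + t • h) i - x₀ i) * Gp.2 i = t * ∑ i, h i * Gp.2 i) := by
    intro t Gp
    constructor <;>
    · rw [Finset.mul_sum]
      refine Finset.sum_congr rfl fun i _ => ?_
      have : (x₀ + t • h) i - x₀ i = t * h i := by
        have : (x₀ + t • h) i = x₀ i + t * h i := rfl
        rw [this]; ring
      rw [this]; ring
  constructor
  · -- min part
    have memb : min D₁ D₂ ∈ {r : ℝ | ∃ G : (Fin n → ℝ) × (Fin n → ℝ),
        (∀ x ∈ X,
          min (∑ i, (x i - x₀ i) * G.1 i) (∑ i, (x i - x₀ i) * G.2 i) ≤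
              min (F₁ x - F₁ x₀) (F₂ x - F₂ x₀) ∧
            max (∑ i, (x i - x₀ i) * G.1 i) (∑ i, (x i - x₀ i) * G.2 i) ≤
              max (F₁ x - F₁ x₀) (F₂ x - F₂ x₀)) ∧
        r = min (∑ i, h i * G.1 i) (∑ i, h i * G.2 i)} :=
      ⟨G, hfeas, by rw [hh1, hh2]⟩
    have ub : ∀ r ∈ {r : ℝ | ∃ G : (Fin n → ℝ) × (Fin n → ℝ),
        (∀ x ∈ X,
          min (∑ i, (x i - x₀ i) * G.1 i) (∑ i, (x i - x₀ i) * G.2 i) ≤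
              min (F₁ x - F₁ x₀) (F₂ x - F₂ x₀) ∧
            max (∑ i, (x i - x₀ i) * G.1 i) (∑ i, (x i - x₀ i) * G.2 i) ≤
              max (F₁ x - F₁ x₀) (F₂ x - F₂ x₀)) ∧
        r = min (∑ i, h i * G.1 i) (∑ i, h i * G.2 i)}, r ≤ min D₁ D₂ := by
      rintro r ⟨Gp, hGfeas, rfl⟩
      refine ge_of_tendsto (hD₁.min hD₂) ?_
      filter_upwards [hev] with t htc
      obtain ⟨ht, htX⟩ := htc
      have hc := (hGfeas (x₀ + t • h) htX).1
      obtain ⟨e1, e2⟩ := hray t Gp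
      rw [e1, e2, ← mul_min_of_nonneg _ _ ht.le] at hc
      rw [min_div_div_right ht.le, le_div_iff₀ ht, mul_comm]
      exact hc
    exact le_antisymm (le_csSup ⟨min D₁ D₂, ub⟩ memb) (csSup_le ⟨_, memb⟩ ub)
  · -- max part
    have memb : max D₁ D₂ ∈ {r : ℝ | ∃ G : (Fin n → ℝ) × (Fin n → ℝ),
        (∀ x ∈ X,
          min (∑ i, (x i - x₀ i) * G.1 i) (∑ i, (x i - x₀ i) * G.2 i) ≤
              min (F₁ x - F₁ x₀) (F₂ x - F₂ x₀) ∧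
            max (∑ i, (x i - x₀ i) * G.1 i) (∑ i, (x i - x₀ i) * G.2 i) ≤
              max (F₁ x - F₁ x₀) (F₂ x - F₂ x₀)) ∧
        r = max (∑ i, h i * G.1 i) (∑ i, h i * G.2 i)} :=
      ⟨G, hfeas, by rw [hh1, hh2]⟩
    have ub : ∀ r ∈ {r : ℝ | ∃ G : (Fin n → ℝ) × (Fin n → ℝ),
        (∀ x ∈ X,
          min (∑ i, (x i - x₀ i) * G.1 i) (∑ i, (x i - x₀ i) * G.2 i) ≤
              min (F₁ x - F₁ x₀) (F₂ x - F₂ x₀) ∧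
            max (∑ i, (x i - x₀ i) * G.1 i) (∑ i, (x i - x₀ i) * G.2 i) ≤
              max (F₁ x - F₁ x₀) (F₂ x - F₂ x₀)) ∧
        r = max (∑ i, h i * G.1 i) (∑ i, h i * G.2 i)}, r ≤ max D₁ D₂ := by
      rintro r ⟨Gp, hGfeas, rfl⟩
      refine ge_of_tendsto (hD₁.max hD₂) ?_
      filter_upwards [hev] with t htc
      obtain ⟨ht, htX⟩ := htc
      have hc := (hGfeas (x₀ + t • h) htX).2
      obtain ⟨e1, e2⟩ := hray t Gp
      rw [e1, e2, ← mul_max_of_nonneg _ _ ht.le] at hc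
      rw [max_div_div_right ht.le, le_div_iff₀ ht, mul_comm]
      exact hc
    exact le_antisymm (le_csSup ⟨max D₁ D₂, ub⟩ memb) (csSup_le ⟨_, memb⟩ ub)
end

section
/- Let F be a proper convex interval-valued function on ℝⁿ and x̄ an interior point of dom(F). Then the gH-subdifferential set ∂F(x̄) is bounded: there exists M > 0 such that ‖Ĝ‖_{I(ℝ)ⁿ} ≤ M for all Ĝ ∈ ∂F(x̄). -/
/-- The gH-subdifferential set at an interior point of the domain is bounded. -/
theorem gH_subdifferential_bounded {n : ℕ}
    (X : Set (EuclideanSpace ℝ (Fin n))) (hXc : Convex ℝ X)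
    (F₁ F₂ : EuclideanSpace ℝ (Fin n) → ℝ)
    (h₁ : ConvexOn ℝ X F₁) (h₂ : ConvexOn ℝ X F₂) (hle : ∀ x ∈ X, F₁ x ≤ F₂ x)
    (x₀ : EuclideanSpace ℝ (Fin n)) (hx₀ : x₀ ∈ interior X) :
    ∃ M > (0 : ℝ), ∀ G : (Fin n → ℝ) × (Fin n → ℝ), (∀ i, G.1 i ≤ G.2 i) →
      (∀ x ∈ X,
        min (∑ i, (x i - x₀ i) * G.1 i) (∑ i, (x i - x₀ i) * G.2 i) ≤
            min (F₁ x - F₁ x₀) (F₂ x - F₂ x₀) ∧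
          max (∑ i, (x i - x₀ i) * G.1 i) (∑ i, (x i - x₀ i) * G.2 i) ≤
            max (F₁ x - F₁ x₀) (F₂ x - F₂ x₀)) →
      (∑ i, max |G.1 i| |G.2 i|) ≤ M := by
  obtain ⟨δ, hδ, hball⟩ := Metric.isOpen_iff.mp isOpen_interior x₀ hx₀
  have hsub : Metric.ball x₀ δ ⊆ X := hball.trans interior_subset
  set e : Fin n → EuclideanSpace ℝ (Fin n) := fun i => EuclideanSpace.single i 1 with he
  set xp : Fin n → EuclideanSpace ℝ (Fin n) := fun i => x₀ + (δ/2) • e i with hxp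
  set xm : Fin n → EuclideanSpace ℝ (Fin n) := fun i => x₀ - (δ/2) • e i with hxm
  have hnorme : ∀ i, ‖(δ/2) • e i‖ = δ/2 := by
    intro i
    rw [norm_smul, he]
    simp [EuclideanSpace.norm_single, abs_of_pos hδ]
  have hxpX : ∀ i, xp i ∈ X := by
    intro i
    apply hsub
    rw [Metric.mem_ball, hxp, dist_eq_norm]
    simp only [add_sub_cancel_left]
    rw [hnorme i]
    linarith
  have hxmX : ∀ i, xm i ∈ X := by
    intro i
    apply hsub
    rw [Metric.mem_ball, hxm, dist_eq_norm]
    simp only [sub_sub_cancel_left, norm_neg]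
    rw [hnorme i]
    linarith
  set A : Fin n → ℝ := fun i =>
    |max (F₁ (xp i) - F₁ x₀) (F₂ (xp i) - F₂ x₀)| +
    |max (F₁ (xm i) - F₁ x₀) (F₂ (xm i) - F₂ x₀)| with hA
  have hAnn : ∀ i, 0 ≤ A i := fun i => add_nonneg (abs_nonneg _) (abs_nonneg _)
  refine ⟨1 + ∑ i, A i / (δ/2), by positivity, ?_⟩
  intro G hG hgrad
  have hsump : ∀ i (g : Fin n → ℝ), (∑ j, (xp i j - x₀ j) * g j) = (δ/2) * g i := by
    intro i g
    rw [Finset.sum_eq_single i]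
    · simp [hxp, he, EuclideanSpace.single_apply]
    · intro j _ hj
      simp [hxp, he, EuclideanSpace.single_apply, hj]
    · simp
  have hsumm : ∀ i (g : Fin n → ℝ), (∑ j, (xm i j - x₀ j) * g j) = -((δ/2) * g i) := by
    intro i g
    rw [Finset.sum_eq_single i]
    · simp [hxm, he, EuclideanSpace.single_apply]
    · intro j _ hj
      simp [hxm, he, EuclideanSpace.single_apply, hj]
    · simp
  have key : ∀ i, max |G.1 i| |G.2 i| ≤ A i / (δ/2) := by
    intro i
    have hp := (hgrad (xp i) (hxpX i)).2
    have hm := (hgrad (xm i) (hxmX i)).2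
    rw [hsump i G.1, hsump i G.2] at hp
    rw [hsumm i G.1, hsumm i G.2] at hm
    have hp2 : (δ/2) * G.2 i ≤ A i :=
      le_trans (le_trans (le_max_right _ _) hp) (le_trans (le_abs_self _)
        (le_add_of_nonneg_right (abs_nonneg _)))
    have hm1 : -((δ/2) * G.1 i) ≤ A i :=
      le_trans (le_trans (le_max_left _ _) hm) (le_trans (le_abs_self _)
        (le_add_of_nonneg_left (abs_nonneg _)))
    have hgi := hG i
    have hδ2 : (0:ℝ) < δ/2 := half_pos hδ
    apply max_le
    · rw [le_div_iff₀ hδ2]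
      rcases abs_cases (G.1 i) with ⟨h, _⟩ | ⟨h, _⟩ <;> nlinarith
    · rw [le_div_iff₀ hδ2]
      rcases abs_cases (G.2 i) with ⟨h, _⟩ | ⟨h, _⟩ <;> nlinarith
  calc ∑ i, max |G.1 i| |G.2 i| ≤ ∑ i, A i / (δ/2) :=
        Finset.sum_le_sum fun i _ => key i
    _ ≤ 1 + ∑ i, A i / (δ/2) := by linarith
end

section
/- Let X ⊆ ℝⁿ be nonempty convex and F a convex interval-valued function on X such that at every x ∈ X there exists a gH-subgradient Ĝₓ ∈ ∂F(x), and suppose there is M > 0 bounding ‖Ĝₓ‖_{I(ℝ)ⁿ} ≤ M uniformly. Then F is gH-Lipschitz continuous on X with constant M: ‖F(x) ⊖_gH F(y)‖_{I(ℝ)} ≤ M‖x−y‖ for all x, y ∈ X. -/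
lemma abs_coord_le_norm' {n : ℕ} (v : EuclideanSpace ℝ (Fin n)) (i : Fin n) :
    |v i| ≤ ‖v‖ := by
  rw [EuclideanSpace.norm_eq]
  refine Real.abs_le_sqrt ?_
  simp only [Real.norm_eq_abs, sq_abs]
  exact Finset.single_le_sum (f := fun j => v j ^ 2)
    (fun j _ => sq_nonneg _) (Finset.mem_univ i)

lemma sum_prod_le {n : ℕ} (x y : EuclideanSpace ℝ (Fin n)) (G B : Fin n → ℝ)
    (hB : ∀ i, |G i| ≤ B i) (M : ℝ) (hBM : ∑ i, B i ≤ M) (hM : 0 ≤ M) :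
    |∑ i, (x i - y i) * G i| ≤ M * ‖x - y‖ := by
  calc |∑ i, (x i - y i) * G i| ≤ ∑ i, |(x i - y i) * G i| :=
        Finset.abs_sum_le_sum_abs _ _
    _ ≤ ∑ i, ‖x - y‖ * B i := by
        refine Finset.sum_le_sum fun i _ => ?_
        rw [abs_mul]
        have h1 : |x i - y i| ≤ ‖x - y‖ := by
          simpa using abs_coord_le_norm' (x - y) i
        exact mul_le_mul h1 (hB i) (abs_nonneg _) (norm_nonneg _)
    _ = (∑ i, B i) * ‖x - y‖ := by
        rw [Finset.sum_mul]; exact Finset.sum_congr rfl fun i _ => mul_comm _ _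
    _ ≤ M * ‖x - y‖ := by
        exact mul_le_mul_of_nonneg_right hBM (norm_nonneg _)

/-- A convex interval-valued function with uniformly bounded gH-subgradients at
every point is gH-Lipschitz continuous. -/
theorem gH_lipschitz_of_bounded_subgradients {n : ℕ}
    (X : Set (EuclideanSpace ℝ (Fin n))) (hXne : X.Nonempty) (hXc : Convex ℝ X)
    (F₁ F₂ : EuclideanSpace ℝ (Fin n) → ℝ)
    (h₁ : ConvexOn ℝ X F₁) (h₂ : ConvexOn ℝ X F₂) (hle : ∀ x ∈ X, F₁ x ≤ F₂ x)
    (M : ℝ) (hM : 0 < M)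
    (hsub : ∀ x ∈ X, ∃ G : (Fin n → ℝ) × (Fin n → ℝ),
      (∀ i, G.1 i ≤ G.2 i) ∧
      (∀ y ∈ X,
        min (∑ i, (y i - x i) * G.1 i) (∑ i, (y i - x i) * G.2 i) ≤
            min (F₁ y - F₁ x) (F₂ y - F₂ x) ∧
          max (∑ i, (y i - x i) * G.1 i) (∑ i, (y i - x i) * G.2 i) ≤
            max (F₁ y - F₁ x) (F₂ y - F₂ x)) ∧
      (∑ i, max |G.1 i| |G.2 i|) ≤ M) :
    ∀ x ∈ X, ∀ y ∈ X,
      max |min (F₁ x - F₁ y) (F₂ x - F₂ y)| |max (F₁ x - F₁ y) (F₂ x - F₂ y)| ≤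
        M * ‖x - y‖ := by
  -- Key: lower bound on both differences
  have key : ∀ x ∈ X, ∀ y ∈ X,
      -(M * ‖x - y‖) ≤ F₁ x - F₁ y ∧ -(M * ‖x - y‖) ≤ F₂ x - F₂ y := by
    intro x hx y hy
    obtain ⟨G, hGle, hGsub, hGM⟩ := hsub y hy
    obtain ⟨hmin, hmax⟩ := hGsub x hx
    have hb1 : |∑ i, (x i - y i) * G.1 i| ≤ M * ‖x - y‖ :=
      sum_prod_le x y G.1 (fun i => max |G.1 i| |G.2 i|)
        (fun i => le_max_left _ _) M hGM hM.le
    have hb2 : |∑ i, (x i - y i) * G.2 i| ≤ M * ‖x - y‖ :=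
      sum_prod_le x y G.2 (fun i => max |G.1 i| |G.2 i|)
        (fun i => le_max_right _ _) M hGM hM.le
    have hlow : -(M * ‖x - y‖) ≤
        min (∑ i, (x i - y i) * G.1 i) (∑ i, (x i - y i) * G.2 i) := by
      apply le_min
      · exact (neg_le_of_abs_le hb1 : _)
      · exact (neg_le_of_abs_le hb2 : _)
    constructor
    · exact hlow.trans (hmin.trans (min_le_left _ _))
    · exact hlow.trans (hmin.trans (min_le_right _ _))
  intro x hx y hy
  obtain ⟨k1, k2⟩ := key x hx y hy
  obtain ⟨k1', k2'⟩ := key y hy x hx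
  rw [norm_sub_rev y x] at k1' k2'
  have a1 : |F₁ x - F₁ y| ≤ M * ‖x - y‖ := by
    rw [abs_le]; constructor <;> linarith
  have a2 : |F₂ x - F₂ y| ≤ M * ‖x - y‖ := by
    rw [abs_le]; constructor <;> linarith
  refine max_le ?_ ?_
  · rcases min_cases (F₁ x - F₁ y) (F₂ x - F₂ y) with ⟨h, _⟩ | ⟨h, _⟩ <;>
      rw [h] <;> assumption
  · rcases max_cases (F₁ x - F₁ y) (F₂ x - F₂ y) with ⟨h, _⟩ | ⟨h, _⟩ <;>
      rw [h] <;> assumption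
end
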